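/- Let E/F be an unramified quadratic extension of non-Archimedean local fields, and let ψ : (E,+) → ℂ^× be a group homomorphism that is trivial on F and trivial on P_E but non-trivial on O_E. If c ∈ O_E^× satisfies ψ(c·x) = 1 for all x ∈ O_F, then the residue class of c in k_E lies in k_F^×. -/

import Mathlib

/-- The value group `ℤₘ₀ = ℤ ∪ {0}` of a normalized discrete valuation. -/
abbrev Zm0 : Type := WithZero (Multiplicative ℤ)

/-- Let `E/F` be an unramified quadratic extension of non-Archimedean
local fields (`val_E(F^×) = ℤ`), and let `ψ : (E,+) → ℂ^×` be an additive character
trivial on `F` and on `P_E` but non-trivial on `O_E`.  If `c ∈ O_E^×` satisfies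
`ψ(c·x) = 1` for all `x ∈ O_F = O_E ∩ F`, then the residue class of `c` in `k_E`
lies in `k_F^×`. -/
theorem statement9
    (E : Type) [Field E] [Valued E Zm0] [CompleteSpace E]
    (hsurj : Function.Surjective (Valued.v : E → Zm0))
    (hfin : Finite (IsLocalRing.ResidueField ((Valued.v : Valuation E Zm0).valuationSubring)))
    (F : Subfield E) (hF2 : Module.finrank F E = 2) (hFclosed : IsClosed (F : Set E))
    (hunram : ∀ γ : Zm0, γ ≠ 0 → ∃ a ∈ F, Valued.v a = γ)
    (ψ : AddChar E ℂˣ)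
    (hψF : ∀ a ∈ F, ψ a = 1)
    (hψP : ∀ x : E, Valued.v x < (1 : Zm0) → ψ x = 1)
    (hψO : ∃ x : E, Valued.v x ≤ (1 : Zm0) ∧ ψ x ≠ 1)
    (c : E) (hc : Valued.v c = (1 : Zm0))
    (hcx : ∀ x ∈ F, Valued.v x ≤ (1 : Zm0) → ψ (c * x) = 1) :
    ∃ a ∈ F, Valued.v a = (1 : Zm0) ∧ Valued.v (c - a) < (1 : Zm0) := by
  classical
  have hfd : Module.Finite F E := Module.finite_of_finrank_eq_succ hF2
  obtain ⟨y, hy1, hyψ⟩ := hψO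
  by_contra Hex
  push_neg at Hex
  have H' : ∀ a ∈ F, ¬ Valued.v (c - a) < (1 : Zm0) := by
    intro a haF hlt
    have hsw : Valued.v (a - c) < Valued.v c := by
      rw [Valuation.map_sub_swap, hc]; exact hlt
    have hva : Valued.v a = (1 : Zm0) := by
      rw [Valuation.map_eq_of_sub_lt _ hsw, hc]
    exact absurd hlt (not_lt.mpr (Hex a haF hva))
  have hdep : ¬ LinearIndependent F ![y, 1, c] := by
    intro h
    have h3 := h.fintype_card_le_finrank
    rw [hF2, Fintype.card_fin] at h3
    omega
  rw [Fintype.not_linearIndependent_iff] at hdep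
  obtain ⟨g, hsum, i0, hgi0⟩ := hdep
  set v : Valuation E Zm0 := Valued.v with hv
  set g0 : E := (g 0 : E) with hg0d
  set g1 : E := (g 1 : E) with hg1d
  set g2 : E := (g 2 : E) with hg2d
  have hsum' : g0 * y + g1 + g2 * c = 0 := by
    have h := hsum
    rw [Fin.sum_univ_three] at h
    simp only [Matrix.cons_val_zero, Matrix.cons_val_one, Matrix.head_cons, Matrix.cons_val_two,
      Matrix.tail_cons] at h
    have h2 : (g 0 : E) * y + (g 1 : E) * 1 + (g 2 : E) * c = 0 := h
    rw [hg0d, hg1d, hg2d]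
    linear_combination h2
  set m : Zm0 := max (v g0) (max (v g1) (v g2)) with hm
  have hm0 : m ≠ 0 := by
    have hne : (g i0 : E) ≠ 0 := by
      simpa using hgi0
    have hvne : v (g i0 : E) ≠ 0 := (Valuation.ne_zero_iff v).mpr hne
    have hle : v (g i0 : E) ≤ m := by
      fin_cases i0
      · exact le_max_left _ _
      · exact le_trans (le_max_left _ _) (le_max_right _ _)
      · exact le_trans (le_max_right _ _) (le_max_right _ _)
    intro h0
    rw [h0] at hle
    exact hvne (le_zero_iff.mp hle)
  rcases eq_or_lt_of_le (le_max_left (v g0) (max (v g1) (v g2)) : v g0 ≤ m) with h0 | h0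
  · -- v g0 = m, so g0 ≠ 0 and y = A + c * B with A, B ∈ F, v B ≤ 1
    have hg0m : v g0 = m := h0
    have hvg0 : v g0 ≠ 0 := by rw [hg0m]; exact hm0
    have hg0ne : g0 ≠ 0 := by
      intro h; rw [h, map_zero] at hvg0; exact hvg0 rfl
    have hAF : -(g1 / g0) ∈ F := F.neg_mem (F.div_mem (g 1).2 (g 0).2)
    have hBF : -(g2 / g0) ∈ F := F.neg_mem (F.div_mem (g 2).2 (g 0).2)
    have hBle : v (-(g2 / g0)) ≤ 1 := by
      rw [v.map_neg, map_div₀, div_le_one₀ (zero_lt_iff.mpr hvg0), hg0m]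
      exact le_trans (le_max_right _ _) (le_max_right _ _)
    have hy : y = -(g1 / g0) + c * -(g2 / g0) := by
      field_simp
      linear_combination hsum'
    apply hyψ
    rw [hy, ψ.map_add_eq_mul, hψF _ hAF, hcx _ hBF hBle, one_mul]
  · -- v g0 < m
    rcases eq_or_lt_of_le (le_trans (le_max_right (v g1) (v g2)) (le_max_right _ _) : v g2 ≤ m)
      with h2 | h2
    · -- v g2 = m, so c is close to an element of F : contradiction with H'
      have hg2m : v g2 = m := h2
      have hvg2 : v g2 ≠ 0 := by rw [hg2m]; exact hm0
      have hg2ne : g2 ≠ 0 := by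
        intro h; rw [h, map_zero] at hvg2; exact hvg2 rfl
      have haF : -(g1 / g2) ∈ F := F.neg_mem (F.div_mem (g 1).2 (g 2).2)
      apply H' _ haF
      have hcd : c - -(g1 / g2) = -(g0 / g2) * y := by
        field_simp
        linear_combination hsum'
      rw [hcd]
      calc v (-(g0 / g2) * y) = v g0 / v g2 * v y := by rw [map_mul, v.map_neg, map_div₀]
        _ ≤ v g0 / v g2 := mul_le_of_le_one_right' hy1
        _ < 1 := by
            rw [div_lt_iff₀ (zero_lt_iff.mpr hvg2), one_mul, hg2m]
            exact h0
    · -- v g0 < m and v g2 < m, hence v g1 = m, but v g1 ≤ max (v g0 * v y) (v g2) < m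
      have hg1m : v g1 = m := by
        rcases max_choice (v g0) (max (v g1) (v g2)) with h | h
        · exact absurd h.symm (ne_of_lt h0)
        · rcases max_choice (v g1) (v g2) with h' | h'
          · rw [hm, h, h']
          · rw [hm, h, h'] at h2
            exact absurd rfl (ne_of_lt h2)
      have hlt : v g1 < m := by
        have hg1eq : g1 = -(g0 * y) - g2 * c := by linear_combination hsum'
        calc v g1 = v (-(g0 * y) - g2 * c) := by rw [hg1eq]
          _ ≤ max (v (-(g0 * y))) (v (g2 * c)) := v.map_sub _ _
          _ = max (v g0 * v y) (v g2 * v c) := by rw [v.map_neg, map_mul, map_mul]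
          _ < m := by
              rw [max_lt_iff]
              constructor
              · exact lt_of_le_of_lt (mul_le_of_le_one_right' hy1) h0
              · rw [hc, mul_one]; exact h2
      rw [hg1m] at hlt
      exact absurd rfl (ne_of_lt hlt)
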